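/- Let 𝔅 be a unital C*-algebra and let ⟨·,·⟩ be a positive 𝔅-sesquilinear pairing on the 𝔅-bimodule 𝔅ξ𝔅. Then there exists a positive conditional expectation φ : 𝔅⟨ξ⟩ → 𝔅 such that φ(ξ b₁* b₂ ξ) = ⟨b₁ξ, b₂ξ⟩ for all b₁, b₂ ∈ 𝔅 (where b ξ denotes b ξ 1 ∈ 𝔅ξ𝔅). -/

import Mathlib

open scoped TensorProduct

/-!
STATEMENT 14: Let `𝔅` be a unital C*-algebra and `⟨·,·⟩` a positive `𝔅`-sesquilinear
pairing on the `𝔅`-bimodule `𝔅ξ𝔅 = 𝔅 ⊗_ℂ 𝔅` (with `b₁ ⊗ b₂` written `b₁ξb₂`).  Then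
there exists a positive conditional expectation `φ : 𝔅⟨ξ⟩ → 𝔅` with
`φ(ξ b₁* b₂ ξ) = ⟨b₁ξ, b₂ξ⟩` for all `b₁, b₂ ∈ 𝔅`.

`𝔅⟨ξ⟩`, the unital *-algebra of noncommutative polynomials in a selfadjoint
indeterminate `ξ` with coefficients in `𝔅` (not commuting with `ξ`), is encoded as a
unital *-algebra `P` containing `𝔅` (via the unital *-algebra embedding `ιP`) together
with a selfadjoint element `x` (playing the role of `ξ`) which generates `P` over `𝔅`
and which is *free* over `𝔅`; freeness is expressed by the universal property `hUP`:
every unital *-homomorphism `𝔅 → C` extends to a unital *-homomorphism `P → C` sending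
`x` to an arbitrarily prescribed selfadjoint element of `C`.  (These data determine
`𝔅⟨ξ⟩` up to *-isomorphism.)
-/

set_option linter.unusedSectionVars false
set_option maxHeartbeats 1000000
open scoped TensorProduct
namespace Stmt14A

variable {B E : Type*} [Ring B] [Algebra ℂ B] [AddCommGroup E] [Module ℂ E]

/-- A pair of operators on `E` that are mutually adjoint with respect to the
`B`-valued sesquilinear form `ip`, and commute with the right action `r`. -/
@[ext] structure AdjPair (ip : E →ₗ⋆[ℂ] E →ₗ[ℂ] B) (r : B → E →ₗ[ℂ] E) where
  S : E →ₗ[ℂ] E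
  T : E →ₗ[ℂ] E
  adj₁ : ∀ v w, ip (S v) w = ip v (T w)
  adj₂ : ∀ v w, ip (T v) w = ip v (S w)
  rc₁ : ∀ b v, S (r b v) = r b (S v)
  rc₂ : ∀ b v, T (r b v) = r b (T v)

namespace AdjPair

variable {ip : E →ₗ⋆[ℂ] E →ₗ[ℂ] B} {r : B → E →ₗ[ℂ] E}

instance : Zero (AdjPair ip r) :=
  ⟨⟨0, 0, by simp, by simp, by simp, by simp⟩⟩

instance : One (AdjPair ip r) :=
  ⟨⟨LinearMap.id, LinearMap.id, by simp, by simp, by simp, by simp⟩⟩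

instance : Add (AdjPair ip r) :=
  ⟨fun a b => ⟨a.S + b.S, a.T + b.T,
    by intro v w; simp [map_add, a.adj₁, b.adj₁],
    by intro v w; simp [map_add, a.adj₂, b.adj₂],
    by intro c v; simp [a.rc₁, b.rc₁],
    by intro c v; simp [a.rc₂, b.rc₂]⟩⟩

instance : Neg (AdjPair ip r) :=
  ⟨fun a => ⟨-a.S, -a.T,
    by intro v w; simp [a.adj₁],
    by intro v w; simp [a.adj₂],
    by intro c v; simp [a.rc₁],
    by intro c v; simp [a.rc₂]⟩⟩

instance : Mul (AdjPair ip r) :=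
  ⟨fun a b => ⟨a.S ∘ₗ b.S, b.T ∘ₗ a.T,
    by intro v w; simp [a.adj₁, b.adj₁],
    by intro v w; simp [a.adj₂, b.adj₂],
    by intro c v; simp [a.rc₁, b.rc₁],
    by intro c v; simp [a.rc₂, b.rc₂]⟩⟩

instance : SMul ℂ (AdjPair ip r) :=
  ⟨fun c a => ⟨c • a.S, (starRingEnd ℂ) c • a.T,
    by intro v w; simp [a.adj₁],
    by intro v w; simp [a.adj₂],
    by intro b v; simp [a.rc₁],
    by intro b v; simp [a.rc₂]⟩⟩

instance : Star (AdjPair ip r) :=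
  ⟨fun a => ⟨a.T, a.S, a.adj₂, a.adj₁, a.rc₂, a.rc₁⟩⟩

@[simp] lemma zero_S : (0 : AdjPair ip r).S = 0 := rfl
@[simp] lemma zero_T : (0 : AdjPair ip r).T = 0 := rfl
@[simp] lemma one_S : (1 : AdjPair ip r).S = LinearMap.id := rfl
@[simp] lemma one_T : (1 : AdjPair ip r).T = LinearMap.id := rfl
@[simp] lemma add_S (a b : AdjPair ip r) : (a + b).S = a.S + b.S := rfl
@[simp] lemma add_T (a b : AdjPair ip r) : (a + b).T = a.T + b.T := rfl
@[simp] lemma neg_S (a : AdjPair ip r) : (-a).S = -a.S := rfl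
@[simp] lemma neg_T (a : AdjPair ip r) : (-a).T = -a.T := rfl
@[simp] lemma mul_S (a b : AdjPair ip r) : (a * b).S = a.S ∘ₗ b.S := rfl
@[simp] lemma mul_T (a b : AdjPair ip r) : (a * b).T = b.T ∘ₗ a.T := rfl
@[simp] lemma smul_S (c : ℂ) (a : AdjPair ip r) : (c • a).S = c • a.S := rfl
@[simp] lemma smul_T (c : ℂ) (a : AdjPair ip r) : (c • a).T = (starRingEnd ℂ) c • a.T := rfl
@[simp] lemma star_S (a : AdjPair ip r) : (star a).S = a.T := rfl
@[simp] lemma star_T (a : AdjPair ip r) : (star a).T = a.S := rfl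

instance : AddCommGroup (AdjPair ip r) where
  add_assoc a b c := by ext <;> simp [add_assoc]
  zero_add a := by ext <;> simp
  add_zero a := by ext <;> simp
  add_comm a b := by ext <;> simp [add_comm]
  neg_add_cancel a := by ext <;> simp
  nsmul := nsmulRec
  zsmul := zsmulRec

instance : Ring (AdjPair ip r) :=
  { (inferInstance : AddCommGroup (AdjPair ip r)) with
    mul := (· * ·)
    one := 1
    left_distrib := fun a b c => by ext <;> simp
    right_distrib := fun a b c => by ext <;> simp
    zero_mul := fun a => by ext <;> simp
    mul_zero := fun a => by ext <;> simp
    mul_assoc := fun a b c => by ext <;> simp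
    one_mul := fun a => by ext <;> simp
    mul_one := fun a => by ext <;> simp }

instance : Module ℂ (AdjPair ip r) where
  one_smul a := by ext <;> simp
  mul_smul c d a := by ext <;> simp [mul_smul]
  smul_zero c := by ext <;> simp
  smul_add c a b := by ext <;> simp
  add_smul c d a := by ext <;> simp [add_smul]
  zero_smul a := by ext <;> simp

instance : Algebra ℂ (AdjPair ip r) :=
  Algebra.ofModule
    (fun c a b => by ext <;> simp [LinearMap.smul_comp, LinearMap.comp_smul])
    (fun c a b => by ext <;> simp [LinearMap.smul_comp, LinearMap.comp_smul])

instance : StarRing (AdjPair ip r) where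
  star := star
  star_involutive a := by ext <;> rfl
  star_mul a b := by ext <;> rfl
  star_add a b := by ext <;> rfl

instance : StarModule ℂ (AdjPair ip r) :=
  ⟨fun c a => by ext <;> simp⟩


/-- the first projection, as a linear map -/
def Sₗ : AdjPair ip r →ₗ[ℂ] (E →ₗ[ℂ] E) where
  toFun := AdjPair.S
  map_add' := fun a b => rfl
  map_smul' := fun c a => rfl

@[simp] lemma Sₗ_apply (a : AdjPair ip r) : Sₗ a = a.S := rfl

end AdjPair

section Main

variable {B : Type*} [Ring B] [StarRing B] [Algebra ℂ B] [StarModule ℂ B]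
  [PartialOrder B] [StarOrderedRing B]

structure Hyp (V : B ⊗[ℂ] B → B ⊗[ℂ] B → B) : Prop where
  addl : ∀ z z' w, V (z + z') w = V z w + V z' w
  addr : ∀ z w w', V z (w + w') = V z w + V z w'
  smull : ∀ (c : ℂ) z w, V (c • z) w = (starRingEnd ℂ) c • V z w
  smulr : ∀ (c : ℂ) z w, V z (c • w) = c • V z w
  ractl : ∀ (b₁ b₂ c : B) w, V (b₁ ⊗ₜ[ℂ] (b₂ * c)) w = star c * V (b₁ ⊗ₜ[ℂ] b₂) w
  ractr : ∀ z (d₁ d₂ d : B), V z (d₁ ⊗ₜ[ℂ] (d₂ * d)) = V z (d₁ ⊗ₜ[ℂ] d₂) * d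
  lact : ∀ (c b₁ b₂ d₁ d₂ : B),
    V ((c * b₁) ⊗ₜ[ℂ] b₂) (d₁ ⊗ₜ[ℂ] d₂) = V (b₁ ⊗ₜ[ℂ] b₂) ((star c * d₁) ⊗ₜ[ℂ] d₂)
  pos : ∀ z, 0 ≤ V z z

variable {V : B ⊗[ℂ] B → B ⊗[ℂ] B → B}

lemma V0l (hV : Hyp V) (w : B ⊗[ℂ] B) : V 0 w = 0 := by
  have h := hV.addl 0 0 w
  rw [add_zero] at h
  exact (left_eq_add.mp h)

lemma V0r (hV : Hyp V) (z : B ⊗[ℂ] B) : V z 0 = 0 := by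
  have h := hV.addr z 0 0
  rw [add_zero] at h
  exact (left_eq_add.mp h)

lemma Vsa (hV : Hyp V) (z : B ⊗[ℂ] B) : star (V z z) = V z z :=
  (IsSelfAdjoint.of_nonneg (hV.pos z))

lemma Vexpand (hV : Hyp V) (z w : B ⊗[ℂ] B) :
    V (z + w) (z + w) = V z z + V z w + V w z + V w w := by
  rw [hV.addl, hV.addr, hV.addr]; abel

lemma Vstar (hV : Hyp V) (z w : B ⊗[ℂ] B) : star (V z w) = V w z := by
  set a := V z w with ha
  set b := V w z with hb
  have h1 : star a + star b = a + b := by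
    have h := Vsa hV (z + w)
    rw [Vexpand hV z w] at h
    simp only [star_add, Vsa hV z, Vsa hV w] at h
    have h' := add_right_cancel h
    rw [add_assoc, add_assoc] at h'
    exact add_left_cancel h'
  have h2 : Complex.I • star a + (-Complex.I) • star b
      = (-Complex.I) • a + Complex.I • b := by
    have hu : V (Complex.I • z) (Complex.I • z) = V z z := by
      rw [hV.smull, hV.smulr, smul_smul]
      simp [Complex.conj_I, Complex.I_mul_I]
    have huw : V (Complex.I • z) w = (-Complex.I) • a := by
      rw [hV.smull]; simp [Complex.conj_I, ha]
    have hwu : V w (Complex.I • z) = Complex.I • b := hV.smulr _ _ _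
    have h := Vsa hV (Complex.I • z + w)
    rw [Vexpand hV (Complex.I • z) w, hu, huw, hwu] at h
    simp only [star_add, Vsa hV z, Vsa hV w, star_smul, Complex.star_def, map_neg,
      Complex.conj_I, neg_neg] at h
    have h' := add_right_cancel h
    rw [add_assoc, add_assoc] at h'
    exact add_left_cancel h'
  have h3 : -star a + star b = a + -b := by
    have h3' := congrArg (fun t => Complex.I • t) h2
    simp only [smul_add, smul_smul] at h3'
    have e1 : Complex.I * Complex.I = (-1 : ℂ) := Complex.I_mul_I
    have e2 : Complex.I * -Complex.I = (1 : ℂ) := by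
      rw [mul_neg, Complex.I_mul_I, neg_neg]
    rw [e1, e2] at h3'
    simpa only [neg_smul, one_smul] using h3'
  have h4 : star a + star a = b + b := by
    calc star a + star a = (star a + star b) - (-star a + star b) := by abel
      _ = (a + b) - (a + -b) := by rw [h1, h3]
      _ = b + b := by abel
  have h5 : (2:ℂ) • star a = (2:ℂ) • b := by
    rw [two_smul, two_smul]; exact h4
  calc star a = (2:ℂ)⁻¹ • ((2:ℂ) • star a) := by rw [smul_smul]; norm_num
    _ = (2:ℂ)⁻¹ • ((2:ℂ) • b) := by rw [h5]
    _ = b := by rw [smul_smul]; norm_num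

/-- left multiplication on the first tensor factor -/
noncomputable def Lt (b : B) : B ⊗[ℂ] B →ₗ[ℂ] B ⊗[ℂ] B :=
  TensorProduct.map (LinearMap.mulLeft ℂ b) LinearMap.id

/-- right multiplication on the second tensor factor -/
noncomputable def Rt (b : B) : B ⊗[ℂ] B →ₗ[ℂ] B ⊗[ℂ] B :=
  TensorProduct.map LinearMap.id (LinearMap.mulRight ℂ b)

@[simp] lemma Lt_tmul (b b₁ b₂ : B) : Lt b (b₁ ⊗ₜ[ℂ] b₂) = (b * b₁) ⊗ₜ[ℂ] b₂ := rfl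
@[simp] lemma Rt_tmul (b b₁ b₂ : B) : Rt b (b₁ ⊗ₜ[ℂ] b₂) = b₁ ⊗ₜ[ℂ] (b₂ * b) := rfl

lemma LtRt_comm (b b' : B) (z : B ⊗[ℂ] B) : Lt b (Rt b' z) = Rt b' (Lt b z) := by
  induction z using TensorProduct.induction_on with
  | zero => simp
  | tmul b₁ b₂ => simp
  | add z₁ z₂ h₁ h₂ => simp [map_add, h₁, h₂]

lemma VRt (hV : Hyp V) (z w : B ⊗[ℂ] B) (b : B) : V z (Rt b w) = V z w * b := by
  induction w using TensorProduct.induction_on with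
  | zero => simp [V0r hV]
  | tmul d₁ d₂ => simpa using hV.ractr z d₁ d₂ b
  | add w₁ w₂ h₁ h₂ => simp [map_add, hV.addr, h₁, h₂, add_mul]

lemma VLt (hV : Hyp V) (b : B) (z w : B ⊗[ℂ] B) : V (Lt b z) w = V z (Lt (star b) w) := by
  induction z using TensorProduct.induction_on with
  | zero => simp [V0l hV]
  | tmul b₁ b₂ =>
    induction w using TensorProduct.induction_on with
    | zero => simp [V0r hV]
    | tmul d₁ d₂ => simpa using hV.lact b b₁ b₂ d₁ d₂
    | add w₁ w₂ h₁ h₂ =>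
      simp only [Lt_tmul] at h₁ h₂
      simp [map_add, hV.addr, h₁, h₂]
  | add z₁ z₂ h₁ h₂ => simp [map_add, hV.addl, h₁, h₂]

lemma V1c (hV : Hyp V) (c : B) (z : B ⊗[ℂ] B) :
    V (1 ⊗ₜ[ℂ] c) z = star c * V (1 ⊗ₜ[ℂ] 1) z := by
  have h : (1:B) ⊗ₜ[ℂ] c = Rt c (1 ⊗ₜ[ℂ] 1) := by simp
  rw [← Vstar hV z, h, ← Vstar hV z (1 ⊗ₜ[ℂ] 1)]
  rw [VRt hV, star_mul]


lemma Lt_zero : Lt (0:B) = 0 :=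
  TensorProduct.ext' (fun x y => by simp)

lemma Lt_add (b c : B) : Lt (b + c) = Lt b + Lt c :=
  TensorProduct.ext' (fun x y => by simp [add_mul, TensorProduct.add_tmul])

lemma Lt_mul (b c : B) : Lt (b * c) = Lt b ∘ₗ Lt c :=
  TensorProduct.ext' (fun x y => by simp [mul_assoc])

lemma Lt_one : Lt (1:B) = LinearMap.id :=
  TensorProduct.ext' (fun x y => by simp)

lemma Lt_smul (c : ℂ) (b : B) : Lt (c • b) = c • Lt b :=
  TensorProduct.ext' (fun x y => by
    simp [smul_mul_assoc, TensorProduct.smul_tmul'])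

noncomputable def ip (hV : Hyp V) :
    (B × (B ⊗[ℂ] B)) →ₗ⋆[ℂ] (B × (B ⊗[ℂ] B)) →ₗ[ℂ] B :=
  LinearMap.mk₂'ₛₗ (starRingEnd ℂ) (RingHom.id ℂ)
    (fun v w => star v.1 * w.1 + V v.2 w.2)
    (fun v₁ v₂ w => by simp only [Prod.fst_add, Prod.snd_add, star_add, add_mul, hV.addl]; abel)
    (fun c v w => by
      simp only [Prod.smul_fst, Prod.smul_snd, star_smul, smul_mul_assoc, hV.smull,
        smul_add, starRingEnd_apply])
    (fun v w₁ w₂ => by simp only [Prod.fst_add, Prod.snd_add, mul_add, hV.addr]; abel)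
    (fun c v w => by
      simp only [Prod.smul_fst, Prod.smul_snd, mul_smul_comm, hV.smulr, smul_add,
        RingHom.id_apply])

@[simp] lemma ip_apply (hV : Hyp V) (v w : B × (B ⊗[ℂ] B)) :
    ip hV v w = star v.1 * w.1 + V v.2 w.2 := rfl

noncomputable def rmap (b : B) : (B × (B ⊗[ℂ] B)) →ₗ[ℂ] B × (B ⊗[ℂ] B) :=
  (LinearMap.mulRight ℂ b).prodMap (Rt b)

@[simp] lemma rmap_apply (b : B) (v : B × (B ⊗[ℂ] B)) :
    rmap b v = (v.1 * b, Rt b v.2) := rfl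

noncomputable def Lop (b : B) : (B × (B ⊗[ℂ] B)) →ₗ[ℂ] B × (B ⊗[ℂ] B) :=
  (LinearMap.mulLeft ℂ b).prodMap (Lt b)

@[simp] lemma Lop_apply (b : B) (v : B × (B ⊗[ℂ] B)) :
    Lop b v = (b * v.1, Lt b v.2) := rfl

/-- the action of `b ∈ B` on `E = B ⊕ BξB` as an adjointable pair -/
noncomputable def fOp (hV : Hyp V) (b : B) : AdjPair (ip hV) rmap where
  S := Lop b
  T := Lop (star b)
  adj₁ := fun v w => by
    simp only [ip_apply, Lop_apply]
    rw [VLt hV, star_mul, mul_assoc]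
  adj₂ := fun v w => by
    simp only [ip_apply, Lop_apply]
    rw [VLt hV, star_mul, star_star, mul_assoc]
  rc₁ := fun b' v => by
    simp [Prod.ext_iff, mul_assoc, LtRt_comm]
  rc₂ := fun b' v => by
    simp [Prod.ext_iff, mul_assoc, LtRt_comm]

@[simp] lemma fOp_S (hV : Hyp V) (b : B) : (fOp hV b).S = Lop b := rfl
@[simp] lemma fOp_T (hV : Hyp V) (b : B) : (fOp hV b).T = Lop (star b) := rfl

noncomputable def fRing (hV : Hyp V) : B →+* AdjPair (ip hV) rmap where
  toFun := fOp hV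
  map_one' := by
    refine AdjPair.ext ?_ ?_ <;>
      simp [Lop, Lt_one, LinearMap.prodMap_id]
  map_mul' := fun b c => by
    refine AdjPair.ext ?_ ?_ <;> (apply LinearMap.ext; intro v) <;>
      simp [Lt_mul, mul_assoc, star_mul]
  map_zero' := by
    refine AdjPair.ext ?_ ?_ <;> (apply LinearMap.ext; intro v) <;>
      simp [Lt_zero]
  map_add' := fun b c => by
    refine AdjPair.ext ?_ ?_ <;> (apply LinearMap.ext; intro v) <;>
      simp [Lt_add, add_mul, star_add]

@[simp] lemma fRing_apply (hV : Hyp V) (b : B) : fRing hV b = fOp hV b := rfl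

lemma Lop_smul (c : ℂ) (b : B) : Lop (c • b) = c • Lop b :=
  LinearMap.ext fun v => by simp [Prod.ext_iff, Lt_smul, smul_mul_assoc]

noncomputable def fAlg (hV : Hyp V) : B →ₐ[ℂ] AdjPair (ip hV) rmap :=
  AlgHom.mk' (fRing hV) (fun c b =>
    AdjPair.ext (Lop_smul c b)
      (by show Lop (star (c • b)) = (starRingEnd ℂ) c • Lop (star b)
          rw [star_smul, Lop_smul]; rfl))

@[simp] lemma fAlg_apply (hV : Hyp V) (b : B) : fAlg hV b = fOp hV b := rfl

noncomputable def fA (hV : Hyp V) : B →⋆ₐ[ℂ] AdjPair (ip hV) rmap :=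
  { fAlg hV with
    map_star' := fun b =>
      AdjPair.ext rfl (by show Lop (star (star b)) = Lop b; rw [star_star]) }

@[simp] lemma fA_apply (hV : Hyp V) (b : B) : fA hV b = fOp hV b := rfl

noncomputable def VrL (hV : Hyp V) : B ⊗[ℂ] B →ₗ[ℂ] B where
  toFun := V ((1:B) ⊗ₜ[ℂ] 1)
  map_add' := hV.addr _
  map_smul' := fun c w => by simpa using hV.smulr c ((1:B) ⊗ₜ[ℂ] 1) w

@[simp] lemma VrL_apply (hV : Hyp V) (w : B ⊗[ℂ] B) :
    VrL hV w = V ((1:B) ⊗ₜ[ℂ] 1) w := rfl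

/-- the action of `ξ` on `E = B ⊕ BξB` as a selfadjoint adjointable pair -/
noncomputable def yOp (hV : Hyp V) : AdjPair (ip hV) rmap where
  S := ((VrL hV).comp (LinearMap.snd ℂ B (B ⊗[ℂ] B))).prod
        ((TensorProduct.mk ℂ B B 1).comp (LinearMap.fst ℂ B (B ⊗[ℂ] B)))
  T := ((VrL hV).comp (LinearMap.snd ℂ B (B ⊗[ℂ] B))).prod
        ((TensorProduct.mk ℂ B B 1).comp (LinearMap.fst ℂ B (B ⊗[ℂ] B)))
  adj₁ := fun v w => by
    simp only [ip_apply, LinearMap.prod_apply, LinearMap.comp_apply, LinearMap.snd_apply,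
      LinearMap.fst_apply, Pi.prod, Function.prod, VrL_apply, TensorProduct.mk_apply]
    have h1 : star (V ((1:B) ⊗ₜ[ℂ] 1) v.2) * w.1 = V v.2 ((1:B) ⊗ₜ[ℂ] w.1) := by
      rw [Vstar hV]
      have h : (1:B) ⊗ₜ[ℂ] w.1 = Rt w.1 ((1:B) ⊗ₜ[ℂ] 1) := by simp
      rw [h, VRt hV]
    rw [h1, V1c hV v.1 w.2, add_comm]
  adj₂ := fun v w => by
    simp only [ip_apply, LinearMap.prod_apply, LinearMap.comp_apply, LinearMap.snd_apply,
      LinearMap.fst_apply, Pi.prod, Function.prod, VrL_apply, TensorProduct.mk_apply]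
    have h1 : star (V ((1:B) ⊗ₜ[ℂ] 1) v.2) * w.1 = V v.2 ((1:B) ⊗ₜ[ℂ] w.1) := by
      rw [Vstar hV]
      have h : (1:B) ⊗ₜ[ℂ] w.1 = Rt w.1 ((1:B) ⊗ₜ[ℂ] 1) := by simp
      rw [h, VRt hV]
    rw [h1, V1c hV v.1 w.2, add_comm]
  rc₁ := fun b v => by
    simp [Prod.ext_iff, VRt hV]
  rc₂ := fun b v => by
    simp [Prod.ext_iff, VRt hV]

lemma yOp_star (hV : Hyp V) : star (yOp hV) = yOp hV := AdjPair.ext rfl rfl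

@[simp] lemma yOp_S_apply (hV : Hyp V) (v : B × (B ⊗[ℂ] B)) :
    (yOp hV).S v = (V ((1:B) ⊗ₜ[ℂ] 1) v.2, (1:B) ⊗ₜ[ℂ] v.1) := rfl

end Main
end Stmt14A

theorem stmt_14 {B P : Type u}
    [CStarAlgebra B] [PartialOrder B] [StarOrderedRing B]
    [Ring P] [Algebra ℂ P] [StarRing P] [StarModule ℂ P]
    -- `P = 𝔅⟨ξ⟩`, with `x` playing the role of `ξ`:
    (ιP : B →⋆ₐ[ℂ] P) (hι : Function.Injective ιP)
    (x : P) (hx : star x = x)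
    (hgen : StarAlgebra.adjoin ℂ (Set.range ιP ∪ {x}) = ⊤)
    (hUP : ∀ (C : Type u) [Ring C] [Algebra ℂ C] [StarRing C] [StarModule ℂ C],
      ∀ (f : B →⋆ₐ[ℂ] C) (y : C), star y = y →
        ∃ g : P →⋆ₐ[ℂ] C, g.comp ιP = f ∧ g x = y)
    -- `V = ⟨·,·⟩` is a positive `𝔅`-sesquilinear pairing on `𝔅ξ𝔅 = 𝔅 ⊗_ℂ 𝔅`:
    (V : B ⊗[ℂ] B → B ⊗[ℂ] B → B)
    (haddl : ∀ z z' w, V (z + z') w = V z w + V z' w)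
    (haddr : ∀ z w w', V z (w + w') = V z w + V z w')
    (hsmull : ∀ (c : ℂ) z w, V (c • z) w = (starRingEnd ℂ) c • V z w)
    (hsmulr : ∀ (c : ℂ) z w, V z (c • w) = c • V z w)
    -- `⟨z c, w⟩ = c* ⟨z, w⟩` and `⟨z, w d⟩ = ⟨z, w⟩ d` (right module actions):
    (hractl : ∀ (b₁ b₂ c : B) (w : B ⊗[ℂ] B),
      V (b₁ ⊗ₜ[ℂ] (b₂ * c)) w = star c * V (b₁ ⊗ₜ[ℂ] b₂) w)
    (hractr : ∀ (z : B ⊗[ℂ] B) (d₁ d₂ d : B),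
      V z (d₁ ⊗ₜ[ℂ] (d₂ * d)) = V z (d₁ ⊗ₜ[ℂ] d₂) * d)
    -- `⟨c z, w⟩ = ⟨z, c* w⟩` (left module action):
    (hlact : ∀ (c b₁ b₂ d₁ d₂ : B),
      V ((c * b₁) ⊗ₜ[ℂ] b₂) (d₁ ⊗ₜ[ℂ] d₂) = V (b₁ ⊗ₜ[ℂ] b₂) ((star c * d₁) ⊗ₜ[ℂ] d₂))
    -- positivity of the pairing:
    (hpos : ∀ z : B ⊗[ℂ] B, 0 ≤ V z z) :
    -- conclusion: a positive conditional expectation `φ : 𝔅⟨ξ⟩ → 𝔅` with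
    -- `φ(ξ b₁* b₂ ξ) = ⟨b₁ξ, b₂ξ⟩`:
    ∃ φ : P →ₗ[ℂ] B,
      (∀ (b b' : B) (p : P), φ (ιP b * p * ιP b') = b * φ p * b') ∧
      (∀ b : B, φ (ιP b) = b) ∧
      (∀ p : P, 0 ≤ φ (star p * p)) ∧
      (∀ b₁ b₂ : B,
        φ (x * ιP (star b₁ * b₂) * x) = V (b₁ ⊗ₜ[ℂ] 1) (b₂ ⊗ₜ[ℂ] 1)) := by
  have hV : Stmt14A.Hyp V := ⟨haddl, haddr, hsmull, hsmulr, hractl, hractr, hlact, hpos⟩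
  obtain ⟨g, hgf, hgx⟩ :=
    hUP (Stmt14A.AdjPair (Stmt14A.ip hV) Stmt14A.rmap) (Stmt14A.fA hV) (Stmt14A.yOp hV)
      (Stmt14A.yOp_star hV)
  have hg : ∀ b : B, g (ιP b) = Stmt14A.fA hV b := fun b => by
    rw [← hgf, StarAlgHom.comp_apply]
  set φ : P →ₗ[ℂ] B :=
    (Stmt14A.ip hV ((1 : B), (0 : B ⊗[ℂ] B))).comp
      ((LinearMap.applyₗ ((1 : B), (0 : B ⊗[ℂ] B))).comp
        ((Stmt14A.AdjPair.Sₗ).comp g.toAlgHom.toLinearMap)) with hφdef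
  have hφ : ∀ p : P, φ p =
      Stmt14A.ip hV ((1 : B), (0 : B ⊗[ℂ] B)) ((g p).S ((1 : B), (0 : B ⊗[ℂ] B))) :=
    fun p => rfl
  refine ⟨φ, ?_, ?_, ?_, ?_⟩
  · intro b b' p
    rw [hφ, hφ, map_mul, map_mul, hg, hg]
    simp only [Stmt14A.AdjPair.mul_S, LinearMap.comp_apply]
    have h2 : (Stmt14A.fA hV b').S ((1 : B), (0 : B ⊗[ℂ] B))
        = Stmt14A.rmap b' ((1 : B), (0 : B ⊗[ℂ] B)) := by
      simp [Prod.ext_iff]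
    rw [h2, (g p).rc₁]
    simp [Stmt14A.V0l hV, mul_assoc]
  · intro b
    rw [hφ, hg]
    simp [Stmt14A.V0l hV]
  · intro p
    rw [hφ, map_mul, map_star]
    simp only [Stmt14A.AdjPair.mul_S, Stmt14A.AdjPair.star_S, LinearMap.comp_apply]
    rw [← (g p).adj₁]
    simp only [Stmt14A.ip_apply]
    exact add_nonneg (star_mul_self_nonneg _) (hpos _)
  · intro b₁ b₂
    rw [hφ, map_mul, map_mul, hgx, hg]
    simp only [Stmt14A.AdjPair.mul_S, LinearMap.comp_apply]
    have s1 : (Stmt14A.yOp hV).S ((1 : B), (0 : B ⊗[ℂ] B)) = (0, (1:B) ⊗ₜ[ℂ] 1) := by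
      simp [Stmt14A.V0r hV]
    rw [s1]
    have s2 : (Stmt14A.fA hV (star b₁ * b₂)).S ((0 : B), (1:B) ⊗ₜ[ℂ] 1)
        = (0, (star b₁ * b₂) ⊗ₜ[ℂ] 1) := by
      simp [Prod.ext_iff]
    rw [s2]
    have h := hlact b₁ 1 1 b₂ 1
    rw [mul_one] at h
    simp [Stmt14A.V0r hV, ← h]
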